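/- Kuratowski's function f is continuous at every point of E, i.e., at every x ∈ C whose support is infinite. -/

import Mathlib

open Set Topology

/-- The Cantor space `2^ℕ`, with coordinates indexed by the positive integers. -/
abbrev Cant : Type := ℕ+ → Bool

/-- The support of a point of the Cantor space, as a set of (positive) natural numbers. -/
def ksupp (x : Cant) : Set ℕ := {i | ∃ h : 0 < i, x ⟨i, h⟩ = true}

open scoped Classical in
/-- Kuratowski's function `f(x) = Σ_j (−1)^{c_x(j)} 2^{−j}`, where `c_x` enumerates the
support of `x` in increasing order; here the summation index `j : ℕ` is the 0-based
version of the paper's 1-based position index, so the weight is `2^{−(j+1)}`. -/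
noncomputable def kf (x : Cant) : ℝ :=
  ∑' j : ℕ, if (ksupp x).Infinite ∨ j < (ksupp x).ncard then
    (-1 : ℝ) ^ (Nat.nth (· ∈ ksupp x) j) * (2 : ℝ) ^ (-(j + 1 : ℤ)) else 0

open scoped Classical in
noncomputable def kterm (x : Cant) (j : ℕ) : ℝ :=
  if (ksupp x).Infinite ∨ j < (ksupp x).ncard then
    (-1 : ℝ) ^ (Nat.nth (· ∈ ksupp x) j) * (2 : ℝ) ^ (-(j + 1 : ℤ)) else 0

lemma kf_eq_tsum_kterm (x : Cant) : kf x = ∑' j, kterm x j := rfl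

lemma two_zpow_neg_succ (j : ℕ) : (2 : ℝ) ^ (-(j + 1 : ℤ)) = (1/2 : ℝ) ^ (j + 1) := by
  rw [one_div, inv_pow, ← zpow_natCast (2 : ℝ) (j + 1), ← zpow_neg]
  norm_num

lemma kterm_norm_le (x : Cant) (j : ℕ) : ‖kterm x j‖ ≤ (1/2 : ℝ) ^ j := by
  rw [kterm]
  split_ifs with h
  · rw [norm_mul, norm_pow, norm_neg, norm_one, one_pow, one_mul, two_zpow_neg_succ,
      Real.norm_eq_abs, abs_of_nonneg (by positivity)]
    exact pow_le_pow_of_le_one (by norm_num) (by norm_num) (Nat.le_succ j)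
  · simp only [norm_zero]
    positivity

lemma kterm_summable (x : Cant) : Summable (kterm x) :=
  Summable.of_norm_bounded (summable_geometric_of_lt_one (by norm_num) (by norm_num))
    (kterm_norm_le x)

open scoped Classical in
lemma kterm_eq_of_agree (x y : Cant) (hx : (ksupp x).Infinite) (N : ℕ)
    (hy : ∀ n ≤ Nat.nth (· ∈ ksupp x) N, (n ∈ ksupp y ↔ n ∈ ksupp x)) :
    ∀ j ≤ N, kterm y j = kterm x j := by
  set p : ℕ → Prop := (· ∈ ksupp x) with hp
  set q : ℕ → Prop := (· ∈ ksupp y) with hq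
  have hxp : (setOf p).Infinite := hx
  set M := Nat.nth p N with hM
  have hcount : ∀ n, n ≤ M + 1 → Nat.count q n = Nat.count p n := by
    intro n
    induction n with
    | zero => simp
    | succ n ih =>
      intro hn
      have hn' : n ≤ M := Nat.lt_succ_iff.mp hn
      rw [Nat.count_succ, Nat.count_succ, ih (le_trans hn' (Nat.le_succ M))]
      have : q n ↔ p n := hy n hn'
      simp [this]
  intro j hj
  have hnjM : Nat.nth p j ≤ M := (Nat.nth_le_nth hxp).2 hj
  have hpn : p (Nat.nth p j) := Nat.nth_mem_of_infinite hxp j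
  have hqn : q (Nat.nth p j) := (hy _ hnjM).2 hpn
  have hcq : Nat.count q (Nat.nth p j) = j := by
    rw [hcount _ (le_trans hnjM (Nat.le_succ M)), Nat.count_nth_of_infinite hxp]
  have hnth : Nat.nth q j = Nat.nth p j := by
    conv_lhs => rw [← hcq]
    exact Nat.nth_count hqn
  have hcond : (ksupp y).Infinite ∨ j < (ksupp y).ncard := by
    by_cases hfin : (ksupp y).Infinite
    · exact Or.inl hfin
    · right
      have hf : (ksupp y).Finite := Set.not_infinite.mp hfin
      have h1 : Nat.count q (Nat.nth p j + 1) = j + 1 := by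
        rw [Nat.count_succ, hcq, if_pos hqn]
      have h2 : Nat.count q (Nat.nth p j + 1) ≤ (ksupp y).ncard := by
        rw [Nat.count_eq_card_filter_range, Set.ncard_eq_toFinset_card _ hf]
        apply Finset.card_le_card
        intro a ha
        simp only [Finset.mem_filter, Finset.mem_range] at ha
        exact hf.mem_toFinset.mpr ha.2
      omega
  show (if (ksupp y).Infinite ∨ j < (ksupp y).ncard then
      (-1 : ℝ) ^ (Nat.nth q j) * (2 : ℝ) ^ (-(j + 1 : ℤ)) else 0) =
    (if (ksupp x).Infinite ∨ j < (ksupp x).ncard then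
      (-1 : ℝ) ^ (Nat.nth p j) * (2 : ℝ) ^ (-(j + 1 : ℤ)) else 0)
  rw [if_pos hcond, if_pos (Or.inl hx), hnth]

/-- Kuratowski's function is continuous at every point of `E`,
i.e. at every point whose support is infinite. -/
theorem kf_continuousAt_of_infinite_support (x : Cant) (hx : (ksupp x).Infinite) :
    ContinuousAt kf x := by
  classical
  rw [ContinuousAt, Metric.tendsto_nhds]
  intro ε hε
  obtain ⟨N, hN⟩ := exists_pow_lt_of_lt_one (show (0:ℝ) < ε/4 by linarith)
    (by norm_num : (1/2:ℝ) < 1)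
  set M := Nat.nth (· ∈ ksupp x) N with hM
  have hev : ∀ᶠ y in 𝓝 x, ∀ n ∈ Finset.range (M + 1), ∀ h : 0 < n, y ⟨n, h⟩ = x ⟨n, h⟩ := by
    rw [Filter.eventually_all_finset]
    intro n _
    rcases Nat.eq_zero_or_pos n with rfl | hpos
    · filter_upwards with y h
      exact absurd h (lt_irrefl 0)
    · have hopen : IsOpen {y : Cant | y ⟨n, hpos⟩ = x ⟨n, hpos⟩} := by
        have := (continuous_apply (A := fun _ : ℕ+ => Bool) ⟨n, hpos⟩).isOpen_preimage
          {x ⟨n, hpos⟩} (isOpen_discrete _)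
        simpa [Set.preimage, Set.mem_singleton_iff] using this
      filter_upwards [hopen.mem_nhds rfl] with y hy h
      exact hy
  filter_upwards [hev] with y hy
  have hagree : ∀ n ≤ M, (n ∈ ksupp y ↔ n ∈ ksupp x) := by
    intro n hn
    have hmem : n ∈ Finset.range (M + 1) := Finset.mem_range.mpr (Nat.lt_succ_of_le hn)
    constructor
    · rintro ⟨h, hh⟩
      exact ⟨h, (hy n hmem h) ▸ hh⟩
    · rintro ⟨h, hh⟩
      exact ⟨h, (hy n hmem h).trans hh⟩
  have hterm : ∀ j ≤ N, kterm y j = kterm x j := kterm_eq_of_agree x y hx N hagree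
  have hsy := kterm_summable y
  have hsx := kterm_summable x
  have hd : kf y - kf x = ∑' j, (kterm y j - kterm x j) := by
    rw [kf_eq_tsum_kterm, kf_eq_tsum_kterm, Summable.tsum_sub hsy hsx]
  set b : ℕ → ℝ := fun j => if j < N + 1 then 0 else 2 * (1/2 : ℝ) ^ j with hb
  have hbound : ∀ j, ‖kterm y j - kterm x j‖ ≤ b j := by
    intro j
    simp only [hb]
    split_ifs with h
    · rw [hterm j (Nat.lt_succ_iff.mp h)]
      simp
    · calc ‖kterm y j - kterm x j‖ ≤ ‖kterm y j‖ + ‖kterm x j‖ := norm_sub_le _ _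
        _ ≤ (1/2:ℝ)^j + (1/2:ℝ)^j := add_le_add (kterm_norm_le y j) (kterm_norm_le x j)
        _ = 2 * (1/2:ℝ)^j := by ring
  have hgeo : Summable (fun j : ℕ => 2 * (1/2:ℝ)^j) :=
    (summable_geometric_of_lt_one (by norm_num) (by norm_num)).mul_left 2
  have hsb : Summable b := by
    apply Summable.of_nonneg_of_le (fun j => by simp only [hb]; split_ifs <;> positivity)
      (fun j => ?_) hgeo
    simp only [hb]
    split_ifs with h
    · positivity
    · exact le_refl _
  have hsd : Summable (fun j => ‖kterm y j - kterm x j‖) := by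
    simpa [Real.norm_eq_abs] using (hsy.sub hsx).abs
  have htsumb : ∑' j, b j = 2 * (1/2:ℝ)^N := by
    rw [← Summable.sum_add_tsum_nat_add (N+1) hsb]
    have h1 : ∑ i ∈ Finset.range (N+1), b i = 0 := by
      apply Finset.sum_eq_zero
      intro i hi
      simp only [hb]
      simp [Finset.mem_range.mp hi]
    have h2 : ∀ i : ℕ, b (i + (N+1)) = (1/2:ℝ)^i * (2 * (1/2:ℝ)^(N+1)) := by
      intro i
      simp only [hb, if_neg (by omega : ¬ i + (N+1) < N + 1)]
      rw [pow_add]; ring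
    rw [h1, zero_add]
    simp_rw [h2]
    rw [tsum_mul_right, tsum_geometric_of_lt_one (by norm_num) (by norm_num)]
    norm_num
    ring
  have key : ‖kf y - kf x‖ ≤ 2 * (1/2:ℝ)^N := by
    rw [hd, ← htsumb]
    exact (norm_tsum_le_tsum_norm hsd).trans (Summable.tsum_le_tsum hbound hsd hsb)
  rw [Real.dist_eq]
  calc |kf y - kf x| = ‖kf y - kf x‖ := (Real.norm_eq_abs _).symm
    _ ≤ 2 * (1/2:ℝ)^N := key
    _ < ε := by nlinarith [hN]
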